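/- Let d = 2, let x_1,…,x_N be pairwise distinct points in ℝ² with particle volumes V_1,…,V_N > 0, let w be a reference weight function, h > 0, ρ > 0, Δt > 0, c₀ > 0. Assume the semi-regularity condition max_i Σ_{j=1}^N V_j |x_i − x_j| |ẇ_h(|x_i − x_j|)| ≤ 2 + c₀ Δt. Let Λ = Λ_fl ∪ Λ_sf ⊆ {1,…,N} (disjoint union), let u* : Λ → ℝ², and let p : Λ → ℝ satisfy p_i = 0 for i ∈ Λ_sf and the discrete Poisson equation (Δp)_i = (ρ/Δt)(∇·u*)_i for i ∈ Λ_fl, where all discrete operators are taken over Λ. Then ‖∇p‖_{2,Λ} ≤ (2 + c₀Δt)(ρ/Δt) ‖u*‖_{2,Λ}. -/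

import Mathlib

open MeasureTheory Finset
open scoped BigOperators RealInnerProductSpace

noncomputable section

namespace ISPH

/-- Points of `ℝ^d`. -/
abbrev Pt (d : ℕ) := EuclideanSpace ℝ (Fin d)

/-- A reference weight function for dimension `d` with support radius `r₀`. -/
structure IsRefWeight (d : ℕ) (w : ℝ → ℝ) (r₀ : ℝ) : Prop where
  r0_pos : 0 < r₀
  smooth : ContDiffOn ℝ 2 w (Set.Ici 0)
  pos : ∀ r : ℝ, 0 < r → r < r₀ → 0 < w r
  eq_zero : ∀ r : ℝ, r₀ ≤ r → w r = 0
  deriv_neg : ∀ r : ℝ, 0 < r → r < r₀ → deriv w r < 0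
  deriv_zero : deriv w 0 = 0
  deriv_eq_zero : ∀ r : ℝ, r₀ ≤ r → deriv w r = 0
  unity : (∫ y : Pt d, w ‖y‖) = 1

/-- The scaled weight function `w_h`. -/
def wh (d : ℕ) (h : ℝ) (w : ℝ → ℝ) : ℝ → ℝ := fun r => (h ^ d)⁻¹ * w (r / h)

/-- `ẇ_h`, the derivative of the scaled weight function. -/
def dwh (d : ℕ) (h : ℝ) (w : ℝ → ℝ) : ℝ → ℝ := deriv (wh d h w)

variable {d N : ℕ}

/-- `∇w_h(|x i − x j|)`; equal to `0` when `i = j`. -/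
def gradW (x : Fin N → Pt d) (dw : ℝ → ℝ) (i j : Fin N) : Pt d :=
  (dw ‖x i - x j‖ / ‖x i - x j‖) • (x i - x j)

/-- `C i j = −2 ẇ_h(|x_i − x_j|)/|x_i − x_j|` off the diagonal, `0` on it. -/
def Cmat (x : Fin N → Pt d) (dw : ℝ → ℝ) (i j : Fin N) : ℝ :=
  if i = j then 0 else -2 * dw ‖x i - x j‖ / ‖x i - x j‖

/-- Discrete divergence over `Λ`. -/
def dDiv (x : Fin N → Pt d) (V : Fin N → ℝ) (dw : ℝ → ℝ) (Λ : Finset (Fin N))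
    (φ : Fin N → Pt d) (i : Fin N) : ℝ :=
  ∑ j ∈ Λ, V j * ⟪φ j + φ i, gradW x dw i j⟫

/-- Discrete gradient over `Λ`. -/
def dGrad (x : Fin N → Pt d) (V : Fin N → ℝ) (dw : ℝ → ℝ) (Λ : Finset (Fin N))
    (ψ : Fin N → ℝ) (i : Fin N) : Pt d :=
  ∑ j ∈ Λ, (V j * (ψ j - ψ i)) • gradW x dw i j

/-- Discrete Laplacian over `Λ` (for scalar- or vector-valued functions). -/
def dLap {F : Type*} [NormedAddCommGroup F] [NormedSpace ℝ F]
    (x : Fin N → Pt d) (V : Fin N → ℝ) (dw : ℝ → ℝ) (Λ : Finset (Fin N))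
    (φ : Fin N → F) (i : Fin N) : F :=
  (2 : ℝ) • ∑ j ∈ Λ.erase i,
    ((V j / ‖x i - x j‖) * ⟪‖x i - x j‖⁻¹ • (x i - x j), gradW x dw i j⟫) • (φ i - φ j)

/-- Discrete inner product over `Λ`. -/
def dInner {F : Type*} [NormedAddCommGroup F] [InnerProductSpace ℝ F]
    (V : Fin N → ℝ) (Λ : Finset (Fin N)) (φ ψ : Fin N → F) : ℝ :=
  ∑ i ∈ Λ, V i * ⟪φ i, ψ i⟫

/-- Square of the discrete `L²` norm over `Λ`. -/
def l2normSq {F : Type*} [NormedAddCommGroup F]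
    (V : Fin N → ℝ) (Λ : Finset (Fin N)) (φ : Fin N → F) : ℝ :=
  ∑ i ∈ Λ, V i * ‖φ i‖ ^ 2

/-- Discrete `L²` norm over `Λ`. -/
def l2norm {F : Type*} [NormedAddCommGroup F]
    (V : Fin N → ℝ) (Λ : Finset (Fin N)) (φ : Fin N → F) : ℝ :=
  Real.sqrt (l2normSq V Λ φ)

/-- Square of the discrete `H¹₀` seminorm over `Λ`. -/
def h1semiSq {F : Type*} [NormedAddCommGroup F]
    (x : Fin N → Pt d) (V : Fin N → ℝ) (dw : ℝ → ℝ) (Λ : Finset (Fin N))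
    (φ : Fin N → F) : ℝ :=
  ∑ i ∈ Λ, V i * ∑ j ∈ Λ.erase i,
    V j * (‖φ i - φ j‖ ^ 2 / ‖x i - x j‖) * |dw ‖x i - x j‖|

/-- Discrete `H¹₀` seminorm over `Λ`. -/
def h1semi {F : Type*} [NormedAddCommGroup F]
    (x : Fin N → Pt d) (V : Fin N → ℝ) (dw : ℝ → ℝ) (Λ : Finset (Fin N))
    (φ : Fin N → F) : ℝ :=
  Real.sqrt (h1semiSq x V dw Λ φ)

/-- Discrete `H₀⁻¹` seminorm over `Λ`. -/
def hm1semi {F : Type*} [NormedAddCommGroup F] [InnerProductSpace ℝ F]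
    (x : Fin N → Pt d) (V : Fin N → ℝ) (dw : ℝ → ℝ) (Λ : Finset (Fin N))
    (φ : Fin N → F) : ℝ :=
  sSup { r : ℝ | ∃ χ : Fin N → F, h1semi x V dw Λ χ ≠ 0 ∧
    r = dInner V Λ φ χ / h1semi x V dw Λ χ }

/-- There is a chain from `i` ending in `target`, with all indices before the last
one in `inter`, and consecutive distances strictly between `0` and `R`. -/
def Chain (x : Fin N → Pt d) (R : ℝ) (inter target : Finset (Fin N)) (i : Fin N) : Prop :=
  ∃ (ζ : ℕ) (c : ℕ → Fin N), c 0 = i ∧ (∀ l < ζ, c l ∈ inter) ∧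
    (∀ l < ζ, 0 < ‖x (c l) - x (c (l + 1))‖ ∧ ‖x (c l) - x (c (l + 1))‖ < R) ∧
    c ζ ∈ target

end ISPH

open ISPH

section AuxProofs
variable {d N : ℕ}

lemma gradW_antisymm (x : Fin N → Pt d) (dw : ℝ → ℝ) (i j : Fin N) :
    gradW x dw j i = - gradW x dw i j := by
  unfold gradW
  rw [norm_sub_rev, show x j - x i = -(x i - x j) by abel, smul_neg]

lemma norm_gradW_le (x : Fin N → Pt d) (dw : ℝ → ℝ) (i j : Fin N) :
    ‖gradW x dw i j‖ ≤ |dw ‖x i - x j‖| := by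
  unfold gradW
  rcases eq_or_ne (x i) (x j) with hij | hij
  · simp [hij]
  · have hr : (0:ℝ) < ‖x i - x j‖ := by
      simpa [norm_pos_iff, sub_eq_zero] using hij
    rw [norm_smul, Real.norm_eq_abs, abs_div, abs_norm, div_mul_cancel₀ _ hr.ne']

lemma inner_gradW (x : Fin N → Pt d) (dw : ℝ → ℝ) {i j : Fin N} (hij : x i ≠ x j) :
    ⟪‖x i - x j‖⁻¹ • (x i - x j), gradW x dw i j⟫ = dw ‖x i - x j‖ := by
  have hr : (0:ℝ) < ‖x i - x j‖ := by
    simpa [norm_pos_iff, sub_eq_zero] using hij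
  unfold gradW
  rw [real_inner_smul_left, real_inner_smul_right, real_inner_self_eq_norm_sq]
  field_simp

lemma dLap_eq (x : Fin N → Pt d) (hx : Function.Injective x) (V : Fin N → ℝ) (dw : ℝ → ℝ)
    (Λ : Finset (Fin N)) (p : Fin N → ℝ) (i : Fin N) :
    dLap x V dw Λ p i =
      ∑ j ∈ Λ.erase i, 2 * (V j * (dw ‖x i - x j‖ / ‖x i - x j‖)) * (p i - p j) := by
  unfold dLap
  rw [Finset.smul_sum]
  refine Finset.sum_congr rfl fun j hj => ?_
  have hij : j ≠ i := (Finset.mem_erase.mp hj).1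
  have hxij : x i ≠ x j := fun hc => hij (hx hc).symm
  rw [inner_gradW x dw hxij]
  simp only [smul_eq_mul]
  ring

lemma sum_sum_erase_swap {M : Type*} [AddCommMonoid M] (Λ : Finset (Fin N))
    (f : Fin N → Fin N → M) :
    ∑ i ∈ Λ, ∑ j ∈ Λ.erase i, f i j = ∑ i ∈ Λ, ∑ j ∈ Λ.erase i, f j i := by
  classical
  have h1 : ∀ g : Fin N → Fin N → M, ∀ i : Fin N,
      ∑ j ∈ Λ.erase i, g i j = ∑ j ∈ Λ, if j = i then 0 else g i j := by
    intro g i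
    rw [← Finset.sum_erase Λ (by simp : (if i = i then (0:M) else g i i) = 0)]
    exact Finset.sum_congr rfl fun j hj => by rw [if_neg (Finset.mem_erase.mp hj).1]
  calc ∑ i ∈ Λ, ∑ j ∈ Λ.erase i, f i j
      = ∑ i ∈ Λ, ∑ j ∈ Λ, if j = i then 0 else f i j :=
        Finset.sum_congr rfl fun i _ => h1 f i
    _ = ∑ j ∈ Λ, ∑ i ∈ Λ, if j = i then 0 else f i j := Finset.sum_comm
    _ = ∑ i ∈ Λ, ∑ j ∈ Λ, if j = i then 0 else f j i := by
        refine Finset.sum_congr rfl fun a _ => Finset.sum_congr rfl fun b _ => ?_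
        by_cases hab : a = b
        · simp [hab]
        · rw [if_neg hab, if_neg (fun hba => hab hba.symm)]
    _ = ∑ i ∈ Λ, ∑ j ∈ Λ.erase i, f j i :=
        (Finset.sum_congr rfl fun i _ => (h1 (fun i j => f j i) i)).symm

lemma sum_sum_antisymm (Λ : Finset (Fin N)) (F : Fin N → Fin N → ℝ)
    (hF : ∀ i j, F j i = - F i j) :
    ∑ i ∈ Λ, ∑ j ∈ Λ, F i j = 0 := by
  have h2 : ∑ i ∈ Λ, ∑ j ∈ Λ, F i j = - ∑ i ∈ Λ, ∑ j ∈ Λ, F i j := by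
    conv_lhs => rw [Finset.sum_comm]
    rw [← Finset.sum_neg_distrib]
    exact Finset.sum_congr rfl fun j _ => by
      rw [← Finset.sum_neg_distrib]
      exact Finset.sum_congr rfl fun i _ => hF j i
  linarith

end AuxProofs

lemma key_lap {d N : ℕ} (x : Fin N → Pt d) (hx : Function.Injective x) (V : Fin N → ℝ)
    (dw : ℝ → ℝ) (hdw : ∀ r : ℝ, 0 < r → dw r ≤ 0)
    (Λ : Finset (Fin N)) (p : Fin N → ℝ) :
    ∑ i ∈ Λ, V i * (p i * dLap x V dw Λ p i) = - h1semiSq x V dw Λ p := by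
  have hL : ∑ i ∈ Λ, V i * (p i * dLap x V dw Λ p i)
      = ∑ i ∈ Λ, ∑ j ∈ Λ.erase i,
          2 * (V i * V j * (dw ‖x i - x j‖ / ‖x i - x j‖)) * (p i * (p i - p j)) := by
    refine Finset.sum_congr rfl fun i _ => ?_
    rw [dLap_eq x hx V dw Λ p i, Finset.mul_sum, Finset.mul_sum]
    exact Finset.sum_congr rfl fun j _ => by ring
  have hsum : (∑ i ∈ Λ, ∑ j ∈ Λ.erase i,
        2 * (V i * V j * (dw ‖x i - x j‖ / ‖x i - x j‖)) * (p i * (p i - p j)))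
      + (∑ i ∈ Λ, ∑ j ∈ Λ.erase i,
        2 * (V i * V j * (dw ‖x i - x j‖ / ‖x i - x j‖)) * (p i * (p i - p j)))
      = -2 * h1semiSq x V dw Λ p := by
    nth_rewrite 2 [sum_sum_erase_swap Λ
      (fun i j => 2 * (V i * V j * (dw ‖x i - x j‖ / ‖x i - x j‖)) * (p i * (p i - p j)))]
    rw [← Finset.sum_add_distrib]
    unfold h1semiSq
    rw [show (-2 : ℝ) * ∑ i ∈ Λ, V i * ∑ j ∈ Λ.erase i,
        V j * (‖p i - p j‖ ^ 2 / ‖x i - x j‖) * |dw ‖x i - x j‖| =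
        ∑ i ∈ Λ, (-2 * (V i * ∑ j ∈ Λ.erase i,
        V j * (‖p i - p j‖ ^ 2 / ‖x i - x j‖) * |dw ‖x i - x j‖|)) from Finset.mul_sum ..]
    refine Finset.sum_congr rfl fun i hi => ?_
    rw [← Finset.sum_add_distrib, Finset.mul_sum,
      show (-2:ℝ) * ∑ j ∈ Λ.erase i, V i * (V j * (‖p i - p j‖ ^ 2 / ‖x i - x j‖) * |dw ‖x i - x j‖|)
        = ∑ j ∈ Λ.erase i, -2 * (V i * (V j * (‖p i - p j‖ ^ 2 / ‖x i - x j‖) * |dw ‖x i - x j‖|))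
        from Finset.mul_sum ..]
    refine Finset.sum_congr rfl fun j hj => ?_
    have hij : j ≠ i := (Finset.mem_erase.mp hj).1
    have hr : (0:ℝ) < ‖x i - x j‖ := by
      simpa [norm_pos_iff, sub_eq_zero] using fun hc => hij (hx hc).symm
    have habs : |dw ‖x i - x j‖| = - dw ‖x i - x j‖ := abs_of_nonpos (hdw _ hr)
    rw [norm_sub_rev (x j) (x i), habs, Real.norm_eq_abs, sq_abs]
    field_simp
    ring
  rw [hL]
  linarith

lemma key_div {d N : ℕ} (x : Fin N → Pt d) (V : Fin N → ℝ) (dw : ℝ → ℝ)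
    (Λ : Finset (Fin N)) (p : Fin N → ℝ) (u : Fin N → Pt d) :
    ∑ i ∈ Λ, V i * (p i * dDiv x V dw Λ u i)
      = - dInner V Λ (dGrad x V dw Λ p) u := by
  have hL : ∑ i ∈ Λ, V i * (p i * dDiv x V dw Λ u i)
      = ∑ i ∈ Λ, ∑ j ∈ Λ, (V i * V j *
          (p i * ⟪u j, gradW x dw i j⟫) + V i * V j * (p i * ⟪u i, gradW x dw i j⟫)) := by
    refine Finset.sum_congr rfl fun i _ => ?_
    unfold dDiv
    rw [Finset.mul_sum, Finset.mul_sum]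
    refine Finset.sum_congr rfl fun j _ => ?_
    rw [inner_add_left]
    ring
  have hR : dInner V Λ (dGrad x V dw Λ p) u
      = ∑ i ∈ Λ, ∑ j ∈ Λ, (V i * V j * (p j * ⟪u i, gradW x dw i j⟫)
          - V i * V j * (p i * ⟪u i, gradW x dw i j⟫)) := by
    unfold dInner dGrad
    refine Finset.sum_congr rfl fun i _ => ?_
    rw [sum_inner, Finset.mul_sum]
    refine Finset.sum_congr rfl fun j _ => ?_
    rw [real_inner_smul_left, real_inner_comm]
    ring
  have key : ∑ i ∈ Λ, ∑ j ∈ Λ, (V i * V j * (p i * ⟪u j, gradW x dw i j⟫)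
      + V i * V j * (p j * ⟪u i, gradW x dw i j⟫)) = 0 := by
    apply sum_sum_antisymm
    intro i j
    rw [gradW_antisymm x dw i j, inner_neg_right, inner_neg_right]
    ring
  have comb : (∑ i ∈ Λ, ∑ j ∈ Λ, (V i * V j *
          (p i * ⟪u j, gradW x dw i j⟫) + V i * V j * (p i * ⟪u i, gradW x dw i j⟫)))
      + (∑ i ∈ Λ, ∑ j ∈ Λ, (V i * V j * (p j * ⟪u i, gradW x dw i j⟫)
          - V i * V j * (p i * ⟪u i, gradW x dw i j⟫)))
      = ∑ i ∈ Λ, ∑ j ∈ Λ, (V i * V j * (p i * ⟪u j, gradW x dw i j⟫)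
          + V i * V j * (p j * ⟪u i, gradW x dw i j⟫)) := by
    rw [← Finset.sum_add_distrib]
    refine Finset.sum_congr rfl fun i _ => ?_
    rw [← Finset.sum_add_distrib]
    exact Finset.sum_congr rfl fun j _ => by ring
  rw [hL, hR]
  linarith [comb, key]

lemma l2normSq_nonneg {N : ℕ} {F : Type*} [NormedAddCommGroup F]
    (V : Fin N → ℝ) (hV : ∀ i, 0 ≤ V i) (Λ : Finset (Fin N)) (φ : Fin N → F) :
    0 ≤ l2normSq V Λ φ :=
  Finset.sum_nonneg fun i _ => mul_nonneg (hV i) (by positivity)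

lemma key_cs {d N : ℕ} (V : Fin N → ℝ) (hV : ∀ i, 0 ≤ V i) (Λ : Finset (Fin N))
    (φ ψ : Fin N → Pt d) :
    dInner V Λ φ ψ ≤ l2norm V Λ φ * l2norm V Λ ψ := by
  have h1 : dInner V Λ φ ψ
      ≤ ∑ i ∈ Λ, (Real.sqrt (V i) * ‖φ i‖) * (Real.sqrt (V i) * ‖ψ i‖) := by
    refine Finset.sum_le_sum fun i _ => ?_
    have he : Real.sqrt (V i) * ‖φ i‖ * (Real.sqrt (V i) * ‖ψ i‖)
        = V i * (‖φ i‖ * ‖ψ i‖) := by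
      rw [show Real.sqrt (V i) * ‖φ i‖ * (Real.sqrt (V i) * ‖ψ i‖)
          = Real.sqrt (V i) * Real.sqrt (V i) * (‖φ i‖ * ‖ψ i‖) by ring,
        Real.mul_self_sqrt (hV i)]
    rw [he]
    exact mul_le_mul_of_nonneg_left (real_inner_le_norm _ _) (hV i)
  have h2 := Finset.sum_mul_sq_le_sq_mul_sq Λ
    (fun i => Real.sqrt (V i) * ‖φ i‖) (fun i => Real.sqrt (V i) * ‖ψ i‖)
  have e1 : ∑ i ∈ Λ, (Real.sqrt (V i) * ‖φ i‖) ^ 2 = l2normSq V Λ φ :=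
    Finset.sum_congr rfl fun i _ => by rw [mul_pow, Real.sq_sqrt (hV i)]
  have e2 : ∑ i ∈ Λ, (Real.sqrt (V i) * ‖ψ i‖) ^ 2 = l2normSq V Λ ψ :=
    Finset.sum_congr rfl fun i _ => by rw [mul_pow, Real.sq_sqrt (hV i)]
  have ht : 0 ≤ ∑ i ∈ Λ, (Real.sqrt (V i) * ‖φ i‖) * (Real.sqrt (V i) * ‖ψ i‖) :=
    Finset.sum_nonneg fun i _ => by positivity
  calc dInner V Λ φ ψ ≤ _ := h1
    _ = Real.sqrt ((∑ i ∈ Λ, (Real.sqrt (V i) * ‖φ i‖) * (Real.sqrt (V i) * ‖ψ i‖)) ^ 2) :=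
        (Real.sqrt_sq ht).symm
    _ ≤ Real.sqrt (l2normSq V Λ φ * l2normSq V Λ ψ) := by
        apply Real.sqrt_le_sqrt
        rw [← e1, ← e2]
        exact h2
    _ = l2norm V Λ φ * l2norm V Λ ψ := by
        unfold l2norm
        exact Real.sqrt_mul (l2normSq_nonneg V hV Λ φ) _

lemma key_grad {d N : ℕ} (x : Fin N → Pt d) (hx : Function.Injective x) (V : Fin N → ℝ)
    (hV : ∀ i, 0 < V i) (dw : ℝ → ℝ) (A : ℝ)
    (hreg : ∀ i, ∑ j : Fin N, V j * ‖x i - x j‖ * |dw ‖x i - x j‖| ≤ A)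
    (Λ : Finset (Fin N)) (p : Fin N → ℝ) :
    l2normSq V Λ (dGrad x V dw Λ p) ≤ A * h1semiSq x V dw Λ p := by
  unfold l2normSq h1semiSq
  rw [Finset.mul_sum]
  refine Finset.sum_le_sum fun i _ => ?_
  have hrpos : ∀ j ∈ Λ.erase i, (0:ℝ) < ‖x i - x j‖ := by
    intro j hj
    have hij : j ≠ i := (Finset.mem_erase.mp hj).1
    simpa [norm_pos_iff, sub_eq_zero] using fun hc => hij (hx hc).symm
  have hpt : ‖dGrad x V dw Λ p i‖
      ≤ ∑ j ∈ Λ.erase i, V j * |p i - p j| * |dw ‖x i - x j‖| := by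
    unfold dGrad
    rw [← Finset.sum_erase Λ (show (V i * (p i - p i)) • gradW x dw i i = 0 by simp)]
    refine (norm_sum_le _ _).trans (Finset.sum_le_sum fun j hj => ?_)
    rw [norm_smul, Real.norm_eq_abs]
    calc |V j * (p j - p i)| * ‖gradW x dw i j‖
        ≤ |V j * (p j - p i)| * |dw ‖x i - x j‖| :=
          mul_le_mul_of_nonneg_left (norm_gradW_le x dw i j) (abs_nonneg _)
      _ = V j * |p i - p j| * |dw ‖x i - x j‖| := by
          rw [abs_mul, abs_of_pos (hV j), abs_sub_comm]
  have hfg : ∀ j ∈ Λ.erase i, V j * |p i - p j| * |dw ‖x i - x j‖|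
      = Real.sqrt (V j * ‖x i - x j‖ * |dw ‖x i - x j‖|)
        * (Real.sqrt (V j * |dw ‖x i - x j‖| / ‖x i - x j‖) * |p i - p j|) := by
    intro j hj
    have hr := hrpos j hj
    have h1 : (0:ℝ) ≤ V j * ‖x i - x j‖ * |dw ‖x i - x j‖| :=
      mul_nonneg (mul_nonneg (hV j).le (norm_nonneg _)) (abs_nonneg _)
    rw [show Real.sqrt (V j * ‖x i - x j‖ * |dw ‖x i - x j‖|)
          * (Real.sqrt (V j * |dw ‖x i - x j‖| / ‖x i - x j‖) * |p i - p j|)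
        = Real.sqrt ((V j * ‖x i - x j‖ * |dw ‖x i - x j‖|)
          * (V j * |dw ‖x i - x j‖| / ‖x i - x j‖)) * |p i - p j| by
        rw [Real.sqrt_mul h1]; ring,
      show (V j * ‖x i - x j‖ * |dw ‖x i - x j‖|) * (V j * |dw ‖x i - x j‖| / ‖x i - x j‖)
        = (V j * |dw ‖x i - x j‖|) ^ 2 by field_simp,
      Real.sqrt_sq (mul_nonneg (hV j).le (abs_nonneg _))]
    ring
  have hCS := Finset.sum_mul_sq_le_sq_mul_sq (Λ.erase i)
    (fun j => Real.sqrt (V j * ‖x i - x j‖ * |dw ‖x i - x j‖|))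
    (fun j => Real.sqrt (V j * |dw ‖x i - x j‖| / ‖x i - x j‖) * |p i - p j|)
  have hf2 : ∑ j ∈ Λ.erase i, (Real.sqrt (V j * ‖x i - x j‖ * |dw ‖x i - x j‖|)) ^ 2 ≤ A := by
    have he : ∀ j ∈ Λ.erase i, (Real.sqrt (V j * ‖x i - x j‖ * |dw ‖x i - x j‖|)) ^ 2
        = V j * ‖x i - x j‖ * |dw ‖x i - x j‖| := fun j hj =>
      Real.sq_sqrt (mul_nonneg (mul_nonneg (hV j).le (norm_nonneg _)) (abs_nonneg _))
    rw [Finset.sum_congr rfl he]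
    refine le_trans ?_ (hreg i)
    exact Finset.sum_le_sum_of_subset_of_nonneg (Finset.subset_univ _) fun j _ _ =>
      mul_nonneg (mul_nonneg (hV j).le (norm_nonneg _)) (abs_nonneg _)
  have hg2 : ∀ j ∈ Λ.erase i,
      (Real.sqrt (V j * |dw ‖x i - x j‖| / ‖x i - x j‖) * |p i - p j|) ^ 2
      = V j * (‖p i - p j‖ ^ 2 / ‖x i - x j‖) * |dw ‖x i - x j‖| := by
    intro j hj
    have hr := hrpos j hj
    rw [mul_pow, Real.sq_sqrt (div_nonneg (mul_nonneg (hV j).le (abs_nonneg _)) hr.le),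
      Real.norm_eq_abs, sq_abs]
    field_simp
  have hg2nn : (0:ℝ) ≤ ∑ j ∈ Λ.erase i,
      V j * (‖p i - p j‖ ^ 2 / ‖x i - x j‖) * |dw ‖x i - x j‖| := by
    refine Finset.sum_nonneg fun j hj => ?_
    exact mul_nonneg (mul_nonneg (hV j).le
      (div_nonneg (by positivity) (norm_nonneg _))) (abs_nonneg _)
  have hmain : ‖dGrad x V dw Λ p i‖ ^ 2
      ≤ A * ∑ j ∈ Λ.erase i, V j * (‖p i - p j‖ ^ 2 / ‖x i - x j‖) * |dw ‖x i - x j‖| := by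
    calc ‖dGrad x V dw Λ p i‖ ^ 2
        ≤ (∑ j ∈ Λ.erase i, V j * |p i - p j| * |dw ‖x i - x j‖|) ^ 2 :=
          pow_le_pow_left₀ (norm_nonneg _) hpt 2
      _ = (∑ j ∈ Λ.erase i, Real.sqrt (V j * ‖x i - x j‖ * |dw ‖x i - x j‖|)
            * (Real.sqrt (V j * |dw ‖x i - x j‖| / ‖x i - x j‖) * |p i - p j|)) ^ 2 := by
          rw [Finset.sum_congr rfl hfg]
      _ ≤ (∑ j ∈ Λ.erase i, (Real.sqrt (V j * ‖x i - x j‖ * |dw ‖x i - x j‖|)) ^ 2)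
            * ∑ j ∈ Λ.erase i,
              (Real.sqrt (V j * |dw ‖x i - x j‖| / ‖x i - x j‖) * |p i - p j|) ^ 2 := hCS
      _ = (∑ j ∈ Λ.erase i, (Real.sqrt (V j * ‖x i - x j‖ * |dw ‖x i - x j‖|)) ^ 2)
            * ∑ j ∈ Λ.erase i, V j * (‖p i - p j‖ ^ 2 / ‖x i - x j‖) * |dw ‖x i - x j‖| := by
          rw [Finset.sum_congr rfl hg2]
      _ ≤ A * ∑ j ∈ Λ.erase i, V j * (‖p i - p j‖ ^ 2 / ‖x i - x j‖) * |dw ‖x i - x j‖| :=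
          mul_le_mul_of_nonneg_right hf2 hg2nn
  calc V i * ‖dGrad x V dw Λ p i‖ ^ 2
      ≤ V i * (A * ∑ j ∈ Λ.erase i, V j * (‖p i - p j‖ ^ 2 / ‖x i - x j‖) * |dw ‖x i - x j‖|) :=
        mul_le_mul_of_nonneg_left hmain (hV i).le
    _ = A * (V i * ∑ j ∈ Λ.erase i,
          V j * (‖p i - p j‖ ^ 2 / ‖x i - x j‖) * |dw ‖x i - x j‖|) := by ring

lemma dwh_nonpos {w : ℝ → ℝ} {r₀ : ℝ} (hw : IsRefWeight 2 w r₀) {h : ℝ} (hh : 0 < h)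
    {r : ℝ} (hr : 0 < r) : dwh 2 h w r ≤ 0 := by
  have hrh : 0 < r / h := div_pos hr hh
  have hdiff : DifferentiableAt ℝ w (r / h) :=
    (hw.smooth.contDiffAt (Ici_mem_nhds hrh)).differentiableAt (by norm_num)
  have h1 : HasDerivAt (fun s : ℝ => w (s / h)) (deriv w (r / h) * (1 / h)) r := by
    have hc : HasDerivAt (fun s : ℝ => s / h) (1 / h) r := by
      simpa using (hasDerivAt_id r).div_const h
    exact (hdiff.hasDerivAt).comp r hc
  have h2 : HasDerivAt (wh 2 h w) ((h ^ 2)⁻¹ * (deriv w (r / h) * (1 / h))) r := by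
    unfold wh
    exact h1.const_mul _
  have h3 : dwh 2 h w r = (h ^ 2)⁻¹ * (deriv w (r / h) * (1 / h)) := h2.deriv
  have h4 : deriv w (r / h) ≤ 0 := by
    rcases lt_or_ge (r / h) r₀ with hlt | hle
    · exact (hw.deriv_neg _ hrh hlt).le
    · exact le_of_eq (hw.deriv_eq_zero _ hle)
  rw [h3]
  have h5 : (0:ℝ) ≤ (h ^ 2)⁻¹ := by positivity
  have h6 : (0:ℝ) ≤ 1 / h := by positivity
  exact mul_nonpos_of_nonneg_of_nonpos h5 (mul_nonpos_of_nonpos_of_nonneg h4 h6)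


/-- under the semi-regularity condition (d = 2), the discrete gradient
of the pressure solving the discrete Poisson equation is bounded in the discrete `L²`
norm by the predicted velocity. -/
theorem statement9 (N : ℕ)
    (x : Fin N → Pt 2) (hx : Function.Injective x)
    (V : Fin N → ℝ) (hV : ∀ i, 0 < V i)
    (w : ℝ → ℝ) (r₀ : ℝ) (hw : IsRefWeight 2 w r₀)
    (h : ℝ) (hh : 0 < h) (ρ Δt c₀ : ℝ) (hρ : 0 < ρ) (hΔt : 0 < Δt) (hc₀ : 0 < c₀)
    (hreg : ∀ i, ∑ j : Fin N,
      V j * ‖x i - x j‖ * |dwh 2 h w ‖x i - x j‖| ≤ 2 + c₀ * Δt)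
    (Λfl Λsf : Finset (Fin N)) (hdisj : Disjoint Λfl Λsf)
    (ustar : Fin N → Pt 2) (p : Fin N → ℝ)
    (hpsf : ∀ i ∈ Λsf, p i = 0)
    (hpois : ∀ i ∈ Λfl, dLap x V (dwh 2 h w) (Λfl ∪ Λsf) p i =
      (ρ / Δt) * dDiv x V (dwh 2 h w) (Λfl ∪ Λsf) ustar i) :
    l2norm V (Λfl ∪ Λsf) (dGrad x V (dwh 2 h w) (Λfl ∪ Λsf) p) ≤
      (2 + c₀ * Δt) * (ρ / Δt) * l2norm V (Λfl ∪ Λsf) ustar := by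
  classical
  set dw := dwh 2 h w with hdwdef
  set Λ := Λfl ∪ Λsf with hΛdef
  have hdw : ∀ r : ℝ, 0 < r → dw r ≤ 0 := fun r hr => dwh_nonpos hw hh hr
  have hρΔ : (0:ℝ) < ρ / Δt := div_pos hρ hΔt
  have hA : (0:ℝ) < 2 + c₀ * Δt := by positivity
  -- energy identities
  have e1 : ∑ i ∈ Λ, V i * (p i * dLap x V dw Λ p i) = - h1semiSq x V dw Λ p :=
    key_lap x hx V dw hdw Λ p
  have e2 : ∑ i ∈ Λ, V i * (p i * dLap x V dw Λ p i)
      = (ρ / Δt) * ∑ i ∈ Λ, V i * (p i * dDiv x V dw Λ ustar i) := by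
    rw [Finset.mul_sum, hΛdef, Finset.sum_union hdisj, Finset.sum_union hdisj]
    congr 1
    · refine Finset.sum_congr rfl fun i hi => ?_
      rw [← hΛdef, hpois i hi]
      ring
    · refine Finset.sum_congr rfl fun i hi => ?_
      rw [hpsf i hi]
      ring
  have e3 : ∑ i ∈ Λ, V i * (p i * dDiv x V dw Λ ustar i)
      = - dInner V Λ (dGrad x V dw Λ p) ustar := key_div x V dw Λ p ustar
  have hE : h1semiSq x V dw Λ p = (ρ / Δt) * dInner V Λ (dGrad x V dw Λ p) ustar := by
    have := e1
    rw [e2, e3] at this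
    have h' : (ρ / Δt) * -dInner V Λ (dGrad x V dw Λ p) ustar
        = -((ρ / Δt) * dInner V Λ (dGrad x V dw Λ p) ustar) := by ring
    rw [h'] at this
    linarith
  have hg2 : l2normSq V Λ (dGrad x V dw Λ p) ≤ (2 + c₀ * Δt) * h1semiSq x V dw Λ p :=
    key_grad x hx V hV dw (2 + c₀ * Δt) hreg Λ p
  have hcs : dInner V Λ (dGrad x V dw Λ p) ustar
      ≤ l2norm V Λ (dGrad x V dw Λ p) * l2norm V Λ ustar :=
    key_cs V (fun i => (hV i).le) Λ _ _
  set a := l2norm V Λ (dGrad x V dw Λ p) with hadef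
  set b := l2norm V Λ ustar with hbdef
  have ha : 0 ≤ a := Real.sqrt_nonneg _
  have hb : 0 ≤ b := Real.sqrt_nonneg _
  have ha2 : a ^ 2 = l2normSq V Λ (dGrad x V dw Λ p) :=
    Real.sq_sqrt (l2normSq_nonneg V (fun i => (hV i).le) Λ _)
  have key : a ^ 2 ≤ (2 + c₀ * Δt) * ((ρ / Δt) * (a * b)) := by
    calc a ^ 2 = l2normSq V Λ (dGrad x V dw Λ p) := ha2
      _ ≤ (2 + c₀ * Δt) * h1semiSq x V dw Λ p := hg2
      _ = (2 + c₀ * Δt) * ((ρ / Δt) * dInner V Λ (dGrad x V dw Λ p) ustar) := by rw [hE]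
      _ ≤ (2 + c₀ * Δt) * ((ρ / Δt) * (a * b)) := by
          refine mul_le_mul_of_nonneg_left (mul_le_mul_of_nonneg_left ?_ hρΔ.le) hA.le
          exact hcs
  rcases eq_or_lt_of_le ha with h0 | h0
  · rw [← h0]
    positivity
  · nlinarith [key, h0]
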